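/- arXiv:0912.5273 — 2 statements merged into one kernel-verified Lean document; each statement's English description precedes it below -/
import Mathlib

section
/- Let A be a commutative ring with unity and D : A → A a derivation. The set D⁻ of formal sums ∑_{i ≤ N} f_i D^i (f_i ∈ A, N ∈ ℤ) with the product A·B = ∑_{i,j} ∑_{r ≥ 0} C(i,r) f_i D^r(g_j) D^{i+j-r} is an associative ring: for each power D^s the coefficient in the product is a finite sum, and the product is associative. -/
open scoped BigOperators

/-- Generalized binomial coefficient `C(i,r) = i(i-1)⋯(i-r+1)/r!` for `i : ℤ`, `r : ℕ`. -/
noncomputable def zchoose (i : ℤ) (r : ℕ) : ℤ :=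
  (∏ k ∈ Finset.range r, (i - (k : ℤ))) / (r.factorial : ℤ)

/-- A derivation of a commutative ring: additive and Leibniz. -/
def IsDeriv {A : Type*} [CommRing A] (d : A → A) : Prop :=
  (∀ x y, d (x + y) = d x + d y) ∧ (∀ x y, d (x * y) = d x * y + x * d y)

section FirstType

variable {A : Type*} [CommRing A]

/-- Coefficients supported on `{i ≤ N}` for some `N`: pseudo-differential operators of the
first type `∑_{i ≤ N} f_i D^i` are represented by their coefficient functions `ℤ → A`. -/
def BddAboveSupp (f : ℤ → A) : Prop := ∃ N : ℤ, ∀ i : ℤ, N < i → f i = 0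

/-- Coefficient of `D^s` in the product `(∑ f_i D^i)·(∑ g_j D^j)
 = ∑_{i,j,r≥0} C(i,r) f_i D^r(g_j) D^{i+j-r}` (here `r = i + j - s ≥ 0`). -/
noncomputable def mulM (d : A → A) (f g : ℤ → A) : ℤ → A :=
  fun s => ∑ᶠ p : ℤ × ℤ,
    if s ≤ p.1 + p.2 then
      zchoose p.1 (p.1 + p.2 - s).toNat • (f p.1 * d^[(p.1 + p.2 - s).toNat] (g p.2))
    else 0

def oneM : ℤ → A := fun i => if i = 0 then 1 else 0

noncomputable def powM (d : A → A) (f : ℤ → A) : ℕ → ℤ → A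
  | 0 => oneM
  | n + 1 => mulM d f (powM d f n)

/-- Formal adjoint `(∑ f_i D^i)* = ∑ (-1)^i D^i ∘ f_i` in coefficient form. -/
noncomputable def adjM (d : A → A) (f : ℤ → A) : ℤ → A :=
  fun s => ∑ᶠ r : ℕ,
    (if Even (s + (r : ℤ)) then zchoose (s + (r : ℤ)) r else -zchoose (s + (r : ℤ)) r) •
      d^[r] (f (s + (r : ℤ)))

/-- Nonnegative (differential-operator) part. -/
def posM (f : ℤ → A) : ℤ → A := fun i => if 0 ≤ i then f i else 0

/-- Strictly negative part. -/
def negM (f : ℤ → A) : ℤ → A := fun i => if i < 0 then f i else 0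

/-- Action of a differential operator `∑_{i ≥ 0} f_i D^i` on an element of `A`. -/
noncomputable def actM (d : A → A) (f : ℤ → A) (x : A) : A :=
  ∑ᶠ i : ℕ, f (i : ℤ) * d^[i] x

/-- The monomial `D^k`. -/
def Dk (k : ℤ) : ℤ → A := fun i => if i = k then 1 else 0

/-- `D^{-1}`. -/
def Dinv : ℤ → A := Dk (-1)

/-- A scalar `u ∈ A` viewed as an operator of order `0`. -/
def cst (u : A) : ℤ → A := fun i => if i = 0 then u else 0

/-- The Drinfeld–Sokolov operator
`L = D^{2n-2} + ∑_{i=1}^{n-1} D^{-1}(u^i D^{2i-1} + D^{2i-1} u^i) + D^{-1} ρ D^{-1} ρ`. -/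
noncomputable def LM (d : A → A) (n : ℕ) (u : Fin (n - 1) → A) (ρ : A) : ℤ → A :=
  fun s =>
    Dk (2 * (n : ℤ) - 2) s
      + (∑ i : Fin (n - 1),
          mulM d Dinv
            (fun t => mulM d (cst (u i)) (Dk (2 * ((i : ℕ) : ℤ) + 1)) t
                + mulM d (Dk (2 * ((i : ℕ) : ℤ) + 1)) (cst (u i)) t) s)
      + mulM d Dinv (mulM d (cst ρ) (mulM d Dinv (cst ρ))) s

end FirstType

section SecondType

variable {A : Type*} [CommRing A]

/-- Operators over a graded ring, in bi-graded coefficient form: `a i j` is the coefficient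
of `D^i` lying in the degree-`j` graded component, so the operator is `∑_{i,j} a_{i,j} D^i`. -/
abbrev OpC (A : Type*) := ℤ → ℕ → A

/-- Product of operators in bi-graded coefficient form:
`A·B = ∑ C(i,r) a_{i,p} D^r(b_{j,q}) D^{i+j-r}`; the `(s,t)` coefficient collects
`i + j - r = s` and `p + r + q = t`. -/
noncomputable def mulO (d : A → A) (a b : OpC A) : OpC A :=
  fun s t => ∑ᶠ (i : ℤ) (p : ℕ) (r : ℕ) (q : ℕ),
    if p + r + q = t then zchoose i r • (a i p * d^[r] (b (s + (r : ℤ) - i) q)) else 0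

def oneO : OpC A := fun i j => if i = 0 ∧ j = 0 then 1 else 0

noncomputable def powO (d : A → A) (a : OpC A) : ℕ → OpC A
  | 0 => oneO
  | n + 1 => mulO d a (powO d a n)

/-- Formal adjoint `A* = ∑ (-1)^i D^i ∘ a_{i,j}` in bi-graded coefficient form. -/
noncomputable def adjO (d : A → A) (a : OpC A) : OpC A :=
  fun s t => ∑ r ∈ Finset.range (t + 1),
    (if Even (s + (r : ℤ)) then zchoose (s + (r : ℤ)) r else -zchoose (s + (r : ℤ)) r) •
      d^[r] (a (s + (r : ℤ)) (t - r))

def posO (a : OpC A) : OpC A := fun i j => if 0 ≤ i then a i j else 0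

def negO (a : OpC A) : OpC A := fun i j => if i < 0 then a i j else 0

def DkO (k : ℤ) : OpC A := fun i j => if i = k ∧ j = 0 then 1 else 0

def DopO : OpC A := DkO 1

def DinvO : OpC A := DkO (-1)

/-- A scalar, given by its graded components `fc j ∈ A_j`, as an operator of order `0`. -/
def scalarO (fc : ℕ → A) : OpC A := fun i j => if i = 0 then fc j else 0

/-- The components of `1 ∈ A`. -/
def unitC : ℕ → A := fun j => if j = 0 then (1 : A) else 0

/-- Action of a differential operator on an element of `A` given by graded components. -/
noncomputable def actO (d : A → A) (a : OpC A) (fc : ℕ → A) : ℕ → A :=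
  fun t => ∑ i ∈ Finset.range (t + 1), ∑ j ∈ Finset.range (t + 1), ∑ p ∈ Finset.range (t + 1),
    if i + j + p = t then a (i : ℤ) j * d^[i] (fc p) else 0

/-- Gradedness: `a i j` lies in the degree-`j` component. -/
def IsGradedO (𝒜 : ℕ → AddSubgroup A) (a : OpC A) : Prop := ∀ i j, a i j ∈ 𝒜 j

/-- Membership in `D⁺`: `∃ m`, support in `{(i,j) : j ≥ max(0, m - i)}`. -/
def InPlusO (a : OpC A) : Prop := ∃ m : ℤ, ∀ (i : ℤ) (j : ℕ), (j : ℤ) < m - i → a i j = 0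

/-- Membership in `D⁻`: `∃ N`, support in `{(i,j) : i ≤ N}`. -/
def InMinusO (a : OpC A) : Prop := ∃ N : ℤ, ∀ (i : ℤ) (j : ℕ), N < i → a i j = 0

/-- A differential operator: no negative powers of `D`. -/
def IsDiffOpO (a : OpC A) : Prop := ∀ i : ℤ, i < 0 → ∀ j, a i j = 0

/-- Apply a map (e.g. a time derivation) to all coefficients. -/
def opMapO {A : Type*} (e : A → A) (a : OpC A) : OpC A := fun i j => e (a i j)

/-- Commutator. -/
noncomputable def commO (d : A → A) (a b : OpC A) : OpC A :=
  fun i j => mulO d a b i j - mulO d b a i j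

/-- The Drinfeld–Sokolov operator `L` in bi-graded coefficient form. -/
noncomputable def LO (d : A → A) (n : ℕ) (uc : Fin (n - 1) → ℕ → A) (ρc : ℕ → A) : OpC A :=
  fun s t =>
    DkO (2 * (n : ℤ) - 2) s t
      + (∑ i : Fin (n - 1),
          mulO d DinvO
            (fun s' t' => mulO d (scalarO (uc i)) (DkO (2 * ((i : ℕ) : ℤ) + 1)) s' t'
                + mulO d (DkO (2 * ((i : ℕ) : ℤ) + 1)) (scalarO (uc i)) s' t') s t)
      + mulO d DinvO (mulO d (scalarO ρc) (mulO d DinvO (scalarO ρc))) s t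

end SecondType


/-! ### Auxiliary lemmas -/

section Aux

lemma zc_descP (i : ℤ) (r : ℕ) :
    (descPochhammer ℤ r).smeval i = ∏ k ∈ Finset.range r, (i - (k:ℤ)) := by
  induction r with
  | zero => simp
  | succ n ih =>
      rw [descPochhammer_succ_right, Polynomial.smeval_mul, ih, Finset.prod_range_succ]
      congr 1
      simp [Polynomial.smeval_sub, Polynomial.smeval_natCast]

lemma zchoose_eq (i : ℤ) (r : ℕ) : zchoose i r = Ring.choose i r := by
  rw [zchoose, ← zc_descP, Ring.descPochhammer_eq_factorial_smul_choose, nsmul_eq_mul]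
  exact Int.mul_ediv_cancel_left _ (by exact_mod_cast r.factorial_ne_zero)

lemma zchoose_mul (i : ℤ) (a b : ℕ) :
    (((a+b).choose a : ℕ) : ℤ) * zchoose i (a+b) = zchoose i a * zchoose (i - (a:ℤ)) b := by
  simp only [zchoose_eq]
  have := Ring.choose_smul_choose i (n := a+b) (k := a) (Nat.le_add_right a b)
  rwa [nsmul_eq_mul, Nat.add_sub_cancel_left] at this

lemma zchoose_vandermonde (x y : ℤ) (c : ℕ) :
    ∑ b ∈ Finset.range (c+1), zchoose x b * zchoose y (c - b) = zchoose (x+y) c := by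
  simp only [zchoose_eq]
  rw [Ring.add_choose_eq c (Commute.all x y), Finset.Nat.sum_antidiagonal_eq_sum_range_succ_mk]

lemma zchoose_key (i j : ℤ) (a c : ℕ) :
    ∑ b ∈ Finset.range (c+1), (((a+b).choose a : ℕ) : ℤ) * zchoose i (a+b) * zchoose j (c-b)
      = zchoose i a * zchoose (i - (a:ℤ) + j) c := by
  calc ∑ b ∈ Finset.range (c+1), (((a+b).choose a : ℕ):ℤ) * zchoose i (a+b) * zchoose j (c-b)
      = ∑ b ∈ Finset.range (c+1), zchoose i a * (zchoose (i - (a:ℤ)) b * zchoose j (c-b)) := by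
        refine Finset.sum_congr rfl fun b _ => ?_
        rw [zchoose_mul, mul_assoc]
    _ = zchoose i a * zchoose (i - (a:ℤ) + j) c := by
        rw [← Finset.mul_sum, zchoose_vandermonde]

variable {A : Type*} [CommRing A] {d : A → A} (hd : IsDeriv d)

/-- The derivation as an additive monoid endomorphism. -/
noncomputable def dEnd (d : A → A) (hd : IsDeriv d) : AddMonoid.End A :=
  AddMonoidHom.mk' d hd.1

lemma it_eq (n : ℕ) : d^[n] = ⇑((dEnd d hd)^n) := by
  rw [AddMonoid.End.coe_pow]; rfl

include hd

lemma it_zero (n : ℕ) : d^[n] (0:A) = 0 := by rw [it_eq hd]; exact map_zero _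

lemma it_zsmul (n : ℕ) (c : ℤ) (x : A) : d^[n] (c • x) = c • d^[n] x := by
  rw [it_eq hd]; exact map_zsmul _ _ _

lemma it_sum {ι : Type*} (n : ℕ) (S : Finset ι) (F : ι → A) :
    d^[n] (∑ p ∈ S, F p) = ∑ p ∈ S, d^[n] (F p) := by
  rw [it_eq hd]; exact map_sum _ _ _

lemma d_sum {ι : Type*} (S : Finset ι) (F : ι → A) :
    d (∑ p ∈ S, F p) = ∑ p ∈ S, d (F p) := by
  rw [show d = ⇑(dEnd d hd) from rfl]; exact map_sum _ _ _

lemma d_nsmul (c : ℕ) (x : A) : d (c • x) = c • d x := by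
  rw [show d = ⇑(dEnd d hd) from rfl]; exact map_nsmul _ _ _

lemma it_leibniz (n : ℕ) (x y : A) :
    d^[n] (x * y) = ∑ a ∈ Finset.range (n+1), (n.choose a) • (d^[a] x * d^[n-a] y) := by
  induction n with
  | zero => simp
  | succ n ih =>
    rw [Function.iterate_succ_apply', ih, d_sum hd]
    have hstep : ∀ a ∈ Finset.range (n+1),
        d ((n.choose a) • (d^[a] x * d^[n-a] y)) =
        (n.choose a) • (d^[a+1] x * d^[n-a] y) + (n.choose a) • (d^[a] x * d^[n+1-a] y) := by
      intro a ha
      rw [d_nsmul hd, hd.2, smul_add]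
      rw [← Function.iterate_succ_apply' d a, ← Function.iterate_succ_apply' d (n-a)]
      have h2 : n - a + 1 = n + 1 - a := by
        have := Finset.mem_range.mp ha; omega
      rw [show a.succ = a + 1 from rfl, show (n-a).succ = n - a + 1 from rfl, h2]
    rw [Finset.sum_congr rfl hstep, Finset.sum_add_distrib]
    rw [Finset.sum_range_succ' (fun a => (((n+1).choose a)) • (d^[a] x * d^[n+1-a] y)) (n+1)]
    simp only [Nat.choose_succ_succ, Nat.succ_sub_succ, add_smul, Nat.choose_zero_right,
      Nat.sub_zero, Function.iterate_zero_apply, one_smul, Finset.sum_add_distrib]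
    rw [Finset.sum_range_succ' (fun a => ((n.choose a)) • (d^[a] x * d^[n+1-a] y)) n]
    simp only [Nat.succ_sub_succ, Nat.choose_zero_right, Nat.sub_zero,
      Function.iterate_zero_apply, one_smul]
    have hext : ∑ a ∈ Finset.range (n+1), (n.choose (a+1)) • (d^[a+1] x * d^[n-a] y)
        = ∑ a ∈ Finset.range n, (n.choose (a+1)) • (d^[a+1] x * d^[n-a] y) := by
      rw [Finset.sum_range_succ, Nat.choose_succ_self, zero_smul, add_zero]
    rw [hext]
    ring

/-- Support of the product-coefficient summand is contained in any big-enough finset. -/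
lemma mulM_supp_subset {f g : ℤ → A} {Nf Ng : ℤ}
    (hf : ∀ i, Nf < i → f i = 0) (hg : ∀ j, Ng < j → g j = 0) (s : ℤ)
    (S : Finset (ℤ × ℤ)) (hS : ∀ i j : ℤ, i ≤ Nf → j ≤ Ng → s ≤ i + j → (i, j) ∈ S) :
    (Function.support fun p : ℤ × ℤ =>
        if s ≤ p.1 + p.2 then
          zchoose p.1 (p.1 + p.2 - s).toNat • (f p.1 * d^[(p.1 + p.2 - s).toNat] (g p.2))
        else 0) ⊆ ↑S := by
  intro p hp
  simp only [Function.mem_support] at hp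
  by_cases hle : s ≤ p.1 + p.2
  · rw [if_pos hle] at hp
    by_cases hi : Nf < p.1
    · exact absurd (by rw [hf p.1 hi, zero_mul, smul_zero]) hp
    by_cases hj : Ng < p.2
    · exact absurd (by rw [hg p.2 hj, it_zero hd, mul_zero, smul_zero]) hp
    exact hS p.1 p.2 (not_lt.mp hi) (not_lt.mp hj) hle
  · exact absurd (if_neg hle) hp

lemma mulM_eq_sum {f g : ℤ → A} {Nf Ng : ℤ}
    (hf : ∀ i, Nf < i → f i = 0) (hg : ∀ j, Ng < j → g j = 0) (s : ℤ)
    (S : Finset (ℤ × ℤ)) (hS : ∀ i j : ℤ, i ≤ Nf → j ≤ Ng → s ≤ i + j → (i, j) ∈ S) :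
    mulM d f g s = ∑ p ∈ S,
        (if s ≤ p.1 + p.2 then
          zchoose p.1 (p.1 + p.2 - s).toNat • (f p.1 * d^[(p.1 + p.2 - s).toNat] (g p.2))
        else 0) :=
  finsum_eq_finset_sum_of_support_subset _ (mulM_supp_subset hd hf hg s S hS)

lemma mulM_bdd {f g : ℤ → A} {Nf Ng : ℤ}
    (hf : ∀ i, Nf < i → f i = 0) (hg : ∀ j, Ng < j → g j = 0) :
    ∀ s : ℤ, Nf + Ng < s → mulM d f g s = 0 := by
  intro s hs
  rw [mulM]
  apply finsum_eq_zero_of_forall_eq_zero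
  rintro ⟨i, j⟩
  simp only
  by_cases hle : s ≤ i + j
  · rw [if_pos hle]
    by_cases hi : Nf < i
    · rw [hf i hi, zero_mul, smul_zero]
    · rw [hg j (by omega), it_zero hd, mul_zero, smul_zero]
  · rw [if_neg hle]

end Aux

section Assoc

variable {A : Type*} [CommRing A] {d : A → A} (hd : IsDeriv d)

/-- Canonical trilinear form for the triple product coefficient. -/
noncomputable def CF (d : A → A) (f g h : ℤ → A) (s : ℤ) : (ℤ × ℤ × ℤ) × ℕ → A := fun x =>
  if s ≤ x.1.1 + x.1.2.1 + x.1.2.2 ∧ x.2 ≤ (x.1.1 + x.1.2.1 + x.1.2.2 - s).toNat then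
    (zchoose x.1.1 x.2 *
        zchoose (x.1.1 - (x.2 : ℤ) + x.1.2.1) ((x.1.1 + x.1.2.1 + x.1.2.2 - s).toNat - x.2)) •
      (f x.1.1 * (d^[x.2] (g x.1.2.1) *
        d^[(x.1.1 + x.1.2.1 + x.1.2.2 - s).toNat - x.2] (h x.1.2.2)))
  else 0

include hd

lemma assoc_left {f g h : ℤ → A} {Nf Ng Nh : ℤ}
    (hf : ∀ i, Nf < i → f i = 0) (hg : ∀ j, Ng < j → g j = 0)
    (hh : ∀ k, Nh < k → h k = 0) (s : ℤ) :
    mulM d (mulM d f g) h s =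
      ∑ x ∈ (Finset.Icc (s - Ng - Nh) Nf ×ˢ
          (Finset.Icc (s - Nf - Nh) Ng ×ˢ Finset.Icc (s - Nf - Ng) Nh)) ×ˢ
          Finset.range ((Nf + Ng + Nh - s).toNat + 1),
        CF d f g h s x := by
  rw [mulM_eq_sum hd (mulM_bdd hd hf hg) hh s
      (Finset.Icc (s - Nh) (Nf + Ng) ×ˢ Finset.Icc (s - Nf - Ng) Nh)
      (by intro i j hi hj hs'; simp only [Finset.mem_product, Finset.mem_Icc]; omega)]
  have hin : ∀ p ∈ Finset.Icc (s - Nh) (Nf + Ng) ×ˢ Finset.Icc (s - Nf - Ng) Nh,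
      (if s ≤ p.1 + p.2 then
        zchoose p.1 (p.1 + p.2 - s).toNat •
          (mulM d f g p.1 * d^[(p.1 + p.2 - s).toNat] (h p.2)) else 0)
      = ∑ q ∈ Finset.Icc (s - Nh - Ng) Nf ×ˢ Finset.Icc (s - Nh - Nf) Ng,
          (if s ≤ p.1 + p.2 ∧ p.1 ≤ q.1 + q.2 then
            (zchoose p.1 (p.1 + p.2 - s).toNat * zchoose q.1 (q.1 + q.2 - p.1).toNat) •
              (f q.1 * (d^[(q.1 + q.2 - p.1).toNat] (g q.2) *
                d^[(p.1 + p.2 - s).toNat] (h p.2)))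
          else 0) := by
    rintro ⟨m, k⟩ hp
    simp only [Finset.mem_product, Finset.mem_Icc] at hp
    by_cases hs1 : s ≤ m + k
    · simp only
      rw [if_pos hs1,
        mulM_eq_sum hd hf hg m
          (Finset.Icc (s - Nh - Ng) Nf ×ˢ Finset.Icc (s - Nh - Nf) Ng)
          (by intro i j hi hj hm; simp only [Finset.mem_product, Finset.mem_Icc]; omega),
        Finset.sum_mul, Finset.smul_sum]
      refine Finset.sum_congr rfl ?_
      rintro ⟨i, j⟩ hq
      simp only
      by_cases hm1 : m ≤ i + j
      · rw [if_pos hm1, if_pos ⟨hs1, hm1⟩, smul_mul_assoc, smul_smul, mul_assoc]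
      · rw [if_neg hm1, if_neg (by tauto), zero_mul, smul_zero]
    · simp only
      rw [if_neg hs1]
      exact (Finset.sum_eq_zero fun q _ => if_neg (by tauto)).symm
  rw [Finset.sum_congr rfl hin, ← Finset.sum_product', ← Finset.sum_filter]
  simp only [CF]
  rw [← Finset.sum_filter]
  refine Finset.sum_nbij'
    (i := fun z => ((z.2.1, z.2.2, z.1.2), (z.2.1 + z.2.2 - z.1.1).toNat))
    (j := fun x => ((x.1.1 + x.1.2.1 - (x.2 : ℤ), x.1.2.2), (x.1.1, x.1.2.1)))
    ?_ ?_ ?_ ?_ ?_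
  · rintro ⟨⟨m, k⟩, ⟨i, j⟩⟩ hz
    simp only [Finset.mem_filter, Finset.mem_product, Finset.mem_Icc, Finset.mem_range] at hz ⊢
    omega
  · rintro ⟨⟨i, j, k⟩, a⟩ hx
    simp only [Finset.mem_filter, Finset.mem_product, Finset.mem_Icc, Finset.mem_range] at hx ⊢
    omega
  · rintro ⟨⟨m, k⟩, ⟨i, j⟩⟩ hz
    simp only [Finset.mem_filter, Finset.mem_product, Finset.mem_Icc] at hz
    simp only [Prod.mk.injEq, eq_self_iff_true, and_true, true_and]
    omega
  · rintro ⟨⟨i, j, k⟩, a⟩ hx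
    simp only [Finset.mem_filter, Finset.mem_product, Finset.mem_Icc, Finset.mem_range] at hx
    simp only [Prod.mk.injEq, eq_self_iff_true, and_true, true_and]
    omega
  · rintro ⟨⟨m, k⟩, ⟨i, j⟩⟩ hz
    simp only [Finset.mem_filter, Finset.mem_product, Finset.mem_Icc] at hz
    have e1 : i - ((i + j - m).toNat : ℤ) + j = m := by omega
    have e2 : (i + j + k - s).toNat - (i + j - m).toNat = (m + k - s).toNat := by omega
    dsimp only
    rw [e1, e2, mul_comm]

/-- Summand for the right-associated product. -/
noncomputable def RB {A : Type*} [CommRing A] (d : A → A) (f g h : ℤ → A) (s : ℤ)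
    (i m : ℤ) (q : ℤ × ℤ) (a : ℕ) : A :=
  if s ≤ i + m ∧ m ≤ q.1 + q.2 ∧ a ≤ (i + m - s).toNat then
    (zchoose i (i + m - s).toNat * zchoose q.1 (q.1 + q.2 - m).toNat *
      (((i + m - s).toNat.choose a : ℕ) : ℤ)) •
      (f i * (d^[a] (g q.1) * d^[((i + m - s).toNat - a) + (q.1 + q.2 - m).toNat] (h q.2)))
  else 0

lemma assoc_right {f g h : ℤ → A} {Nf Ng Nh : ℤ}
    (hf : ∀ i, Nf < i → f i = 0) (hg : ∀ j, Ng < j → g j = 0)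
    (hh : ∀ k, Nh < k → h k = 0) (s : ℤ) :
    mulM d f (mulM d g h) s =
      ∑ x ∈ (Finset.Icc (s - Ng - Nh) Nf ×ˢ
          (Finset.Icc (s - Nf - Nh) Ng ×ˢ Finset.Icc (s - Nf - Ng) Nh)) ×ˢ
          Finset.range ((Nf + Ng + Nh - s).toNat + 1),
        CF d f g h s x := by
  rw [mulM_eq_sum hd hf (mulM_bdd hd hg hh) s
      (Finset.Icc (s - Ng - Nh) Nf ×ˢ Finset.Icc (s - Nf) (Ng + Nh))
      (by intro i j hi hj hs'; simp only [Finset.mem_product, Finset.mem_Icc]; omega)]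
  have hin : ∀ p ∈ Finset.Icc (s - Ng - Nh) Nf ×ˢ Finset.Icc (s - Nf) (Ng + Nh),
      (if s ≤ p.1 + p.2 then
        zchoose p.1 (p.1 + p.2 - s).toNat •
          (f p.1 * d^[(p.1 + p.2 - s).toNat] (mulM d g h p.2)) else 0)
      = ∑ q ∈ Finset.Icc (s - Nf - Nh) Ng ×ˢ Finset.Icc (s - Nf - Ng) Nh,
          ∑ a ∈ Finset.range ((Nf + Ng + Nh - s).toNat + 1),
            RB d f g h s p.1 p.2 q a := by
    rintro ⟨i, m⟩ hp
    simp only [Finset.mem_product, Finset.mem_Icc] at hp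
    dsimp only
    by_cases hs1 : s ≤ i + m
    · rw [if_pos hs1,
        mulM_eq_sum hd hg hh m
          (Finset.Icc (s - Nf - Nh) Ng ×ˢ Finset.Icc (s - Nf - Ng) Nh)
          (by intro j k hj hk hm; simp only [Finset.mem_product, Finset.mem_Icc]; omega),
        it_sum hd, Finset.mul_sum, Finset.smul_sum]
      refine Finset.sum_congr rfl ?_
      rintro ⟨j, k⟩ hq
      simp only [Finset.mem_product, Finset.mem_Icc] at hq
      by_cases hm1 : m ≤ j + k
      · rw [if_pos hm1, it_zsmul hd, it_leibniz hd, Finset.smul_sum, Finset.mul_sum,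
          Finset.smul_sum]
        have hsub : Finset.range ((i + m - s).toNat + 1) ⊆
            Finset.range ((Nf + Ng + Nh - s).toNat + 1) :=
          Finset.range_subset_range.mpr (by omega)
        refine (Finset.sum_congr rfl fun a ha => ?_).trans
          (Finset.sum_subset hsub fun a hb ha => ?_)
        · simp only [Finset.mem_range] at ha
          rw [RB, if_pos ⟨hs1, hm1, by omega⟩, Function.iterate_add_apply,
            mul_smul_comm, mul_smul_comm, ← natCast_zsmul, smul_smul, smul_smul]
        · simp only [Finset.mem_range] at hb ha
          exact if_neg (by simp only [RB]; omega)
      · rw [if_neg hm1, it_zero hd, mul_zero, smul_zero]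
        exact (Finset.sum_eq_zero fun a _ => by rw [RB]; exact if_neg (by tauto)).symm
    · rw [if_neg hs1]
      exact (Finset.sum_eq_zero fun q _ => Finset.sum_eq_zero fun a _ => by
        rw [RB]; exact if_neg (by tauto)).symm
  rw [Finset.sum_congr rfl hin,
    Finset.sum_product' (Finset.Icc (s - Ng - Nh) Nf) (Finset.Icc (s - Nf) (Ng + Nh))
      (fun i m =>
        ∑ q ∈ Finset.Icc (s - Nf - Nh) Ng ×ˢ Finset.Icc (s - Nf - Ng) Nh,
          ∑ a ∈ Finset.range ((Nf + Ng + Nh - s).toNat + 1), RB d f g h s i m q a)]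
  have hswap : ∀ i ∈ Finset.Icc (s - Ng - Nh) Nf,
      (∑ m ∈ Finset.Icc (s - Nf) (Ng + Nh),
        ∑ q ∈ Finset.Icc (s - Nf - Nh) Ng ×ˢ Finset.Icc (s - Nf - Ng) Nh,
          ∑ a ∈ Finset.range ((Nf + Ng + Nh - s).toNat + 1), RB d f g h s i m q a)
      = ∑ q ∈ Finset.Icc (s - Nf - Nh) Ng ×ˢ Finset.Icc (s - Nf - Ng) Nh,
          ∑ a ∈ Finset.range ((Nf + Ng + Nh - s).toNat + 1),
            ∑ m ∈ Finset.Icc (s - Nf) (Ng + Nh), RB d f g h s i m q a := by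
    intro i _
    rw [Finset.sum_comm]
    exact Finset.sum_congr rfl fun q _ => Finset.sum_comm
  rw [Finset.sum_congr rfl hswap]
  have hkey : ∀ i ∈ Finset.Icc (s - Ng - Nh) Nf,
      ∀ q ∈ Finset.Icc (s - Nf - Nh) Ng ×ˢ Finset.Icc (s - Nf - Ng) Nh,
      ∀ a ∈ Finset.range ((Nf + Ng + Nh - s).toNat + 1),
      (∑ m ∈ Finset.Icc (s - Nf) (Ng + Nh), RB d f g h s i m q a)
        = CF d f g h s ((i, q.1, q.2), a) := by
    intro i hi q hq a ha
    obtain ⟨j, k⟩ := q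
    simp only [Finset.mem_Icc, Finset.mem_product, Finset.mem_range] at hi hq ha
    simp only [RB, CF]
    by_cases hc : s ≤ i + j + k ∧ a ≤ (i + j + k - s).toNat
    · rw [if_pos hc]
      have hterm : ∀ m ∈ Finset.Icc (s - Nf) (Ng + Nh),
          (if s ≤ i + m ∧ m ≤ j + k ∧ a ≤ (i + m - s).toNat then
            (zchoose i (i + m - s).toNat * zchoose j (j + k - m).toNat *
              (((i + m - s).toNat.choose a : ℕ) : ℤ)) •
              (f i * (d^[a] (g j) * d^[((i + m - s).toNat - a) + (j + k - m).toNat] (h k)))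
          else 0)
          = (if s ≤ i + m ∧ m ≤ j + k ∧ a ≤ (i + m - s).toNat then
              zchoose i (i + m - s).toNat * zchoose j (j + k - m).toNat *
                (((i + m - s).toNat.choose a : ℕ) : ℤ)
            else 0) •
            (f i * (d^[a] (g j) * d^[(i + j + k - s).toNat - a] (h k))) := by
        intro m hm
        simp only [Finset.mem_Icc] at hm
        by_cases hcm : s ≤ i + m ∧ m ≤ j + k ∧ a ≤ (i + m - s).toNat
        · rw [if_pos hcm, if_pos hcm]
          have e : ((i + m - s).toNat - a) + (j + k - m).toNat = (i + j + k - s).toNat - a := by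
            omega
          rw [e]
        · rw [if_neg hcm, if_neg hcm, zero_smul]
      rw [Finset.sum_congr rfl hterm, ← Finset.sum_smul]
      congr 1
      rw [← zchoose_key i j a ((i + j + k - s).toNat - a), ← Finset.sum_filter]
      refine Finset.sum_nbij' (i := fun m => (i + m - s).toNat - a)
        (j := fun b => s - i + (a : ℤ) + (b : ℤ)) ?_ ?_ ?_ ?_ ?_
      · intro m hm
        simp only [Finset.mem_filter, Finset.mem_Icc, Finset.mem_range] at hm ⊢
        omega
      · intro b hb
        simp only [Finset.mem_filter, Finset.mem_Icc, Finset.mem_range] at hb ⊢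
        omega
      · intro m hm
        simp only [Finset.mem_filter, Finset.mem_Icc] at hm
        try dsimp only
        omega
      · intro b hb
        simp only [Finset.mem_filter, Finset.mem_Icc, Finset.mem_range] at hb
        try dsimp only
        omega
      · intro m hm
        simp only [Finset.mem_filter, Finset.mem_Icc] at hm
        try dsimp only
        set b := (i + m - s).toNat - a with hb
        have e1 : (i + m - s).toNat = a + b := by omega
        have e2 : (j + k - m).toNat = (i + j + k - s).toNat - a - b := by omega
        rw [e1, e2]
        ring
    · rw [if_neg hc]
      refine Finset.sum_eq_zero fun m hm => if_neg ?_
      simp only [Finset.mem_Icc] at hm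
      omega
  rw [Finset.sum_congr rfl fun i hi => Finset.sum_congr rfl fun q hq =>
    Finset.sum_congr rfl fun a ha => hkey i hi q hq a ha]
  conv_rhs => rw [Finset.sum_product, Finset.sum_product]

end Assoc
/-- Pseudo-differential operators of the first type over a commutative ring `A`
with a derivation `D` form an associative ring: for each power `D^s` the coefficient of the
product is a finite sum of elements of `A`, operators with coefficient support bounded above
are closed under the product, and the product is associative. -/
theorem pdo_first_type_is_ring {A : Type*} [CommRing A] (d : A → A) (hd : IsDeriv d) :
    (∀ f g : ℤ → A, BddAboveSupp f → BddAboveSupp g → ∀ s : ℤ,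
      (Function.support fun p : ℤ × ℤ =>
        if s ≤ p.1 + p.2 then
          zchoose p.1 (p.1 + p.2 - s).toNat • (f p.1 * d^[(p.1 + p.2 - s).toNat] (g p.2))
        else 0).Finite)
    ∧ (∀ f g : ℤ → A, BddAboveSupp f → BddAboveSupp g → BddAboveSupp (mulM d f g))
    ∧ (∀ f g h : ℤ → A, BddAboveSupp f → BddAboveSupp g → BddAboveSupp h →
        mulM d (mulM d f g) h = mulM d f (mulM d g h)) := by
  refine ⟨?_, ?_, ?_⟩
  · rintro f g ⟨Nf, hf⟩ ⟨Ng, hg⟩ s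
    exact Set.Finite.subset (Finset.Icc (s - Ng) Nf ×ˢ Finset.Icc (s - Nf) Ng).finite_toSet
      (mulM_supp_subset hd hf hg s _
        (by intro i j hi hj hs; simp only [Finset.mem_product, Finset.mem_Icc]; omega))
  · rintro f g ⟨Nf, hf⟩ ⟨Ng, hg⟩
    exact ⟨Nf + Ng, mulM_bdd hd hf hg⟩
  · rintro f g h ⟨Nf, hf⟩ ⟨Ng, hg⟩ ⟨Nh, hh⟩
    funext s
    rw [assoc_left hd hf hg hh s, assoc_right hd hf hg hh s]
end

section
/- With Δ defined as Δ(R) = a − αᵗR₁^{-1}β for R = [[αᵗ,a],[R₁,β]] with R₁ invertible: (a) for any upper triangular matrix Ñ ∈ R^{m×m} with unity on the main diagonal, Δ(ÑRÑ^{-1}) = Δ(R); (b) if * is an anti-isomorphism of R and T is the anti-isomorphism of R^{m×m} defined by (R^T)_{ij} = R*_{m+1-j, m+1-i}, then Δ(R^T) = Δ(R)*. -/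
open scoped BigOperators

/-- `Δ(R) = a - αᵗ R₁⁻¹ β` for the block form `R = [[αᵗ, a],[R₁, β]]`, where `R1inv` is the
inverse of the lower-left block `R₁`. -/
noncomputable def DeltaOf {S : Type*} [Ring S] (m : ℕ)
    (R : Matrix (Fin (m + 1)) (Fin (m + 1)) S) (R1inv : Matrix (Fin m) (Fin m) S) : S :=
  R 0 (Fin.last m)
    - ∑ i : Fin m, ∑ j : Fin m, R 0 i.castSucc * R1inv i j * R j.succ (Fin.last m)


section DeltaHelpers
variable {S : Type*} [Ring S]

lemma aux_inv_tri {n : ℕ} {N M : Matrix (Fin n) (Fin n) S}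
    (htri : ∀ i j, j < i → N i j = 0) (hdiag : ∀ i, N i i = 1)
    (h : M * N = 1) :
    (∀ i j, j < i → M i j = 0) ∧ (∀ i, M i i = 1) := by
  have hz : ∀ (t : ℕ) (j i : Fin n), (j : ℕ) = t → j < i → M i j = 0 := by
    intro t
    induction t using Nat.strong_induction_on with
    | _ t ih =>
      intro j i hjt hij
      have h1 : (M * N) i j = 0 := by
        rw [h, Matrix.one_apply_ne (ne_of_gt hij)]
      rw [Matrix.mul_apply] at h1
      have h2 : ∑ k, M i k * N k j = M i j * N j j := by
        apply Finset.sum_eq_single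
        · intro k _ hk
          rcases lt_or_gt_of_ne hk with hlt | hgt
          · rw [ih (k : ℕ) (hjt ▸ hlt) k i rfl (hlt.trans hij), zero_mul]
          · rw [htri k j hgt, mul_zero]
        · simp
      rw [h2, hdiag, mul_one] at h1
      exact h1
  have hz' : ∀ i j, j < i → M i j = 0 := fun i j hij => hz (j : ℕ) j i rfl hij
  refine ⟨hz', fun i => ?_⟩
  have h1 : (M * N) i i = 1 := by rw [h, Matrix.one_apply_eq]
  rw [Matrix.mul_apply] at h1
  have h2 : ∑ k, M i k * N k i = M i i * N i i := by
    apply Finset.sum_eq_single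
    · intro k _ hk
      rcases lt_or_gt_of_ne hk with hlt | hgt
      · rw [hz' i k hlt, zero_mul]
      · rw [htri k i hgt, mul_zero]
    · simp
  rw [h2, hdiag, mul_one] at h1
  exact h1

lemma aux_block_succ {m : ℕ} {A B : Matrix (Fin (m + 1)) (Fin (m + 1)) S}
    (hA : ∀ i j, j < i → A i j = 0) (h : A * B = 1) :
    (Matrix.of fun i j : Fin m => A i.succ j.succ)
      * (Matrix.of fun i j : Fin m => B i.succ j.succ) = 1 := by
  ext i j
  have h1 : (A * B) i.succ j.succ = (1 : Matrix (Fin (m+1)) (Fin (m+1)) S) i.succ j.succ := by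
    rw [h]
  rw [Matrix.mul_apply, Fin.sum_univ_succ, hA i.succ 0 (Fin.succ_pos i), zero_mul, zero_add] at h1
  rw [Matrix.mul_apply]
  simp only [Matrix.of_apply]
  rw [h1, Matrix.one_apply, Matrix.one_apply]
  simp [Fin.succ_inj]

lemma aux_block_cast {m : ℕ} {A B : Matrix (Fin (m + 1)) (Fin (m + 1)) S}
    (hB : ∀ i j, j < i → B i j = 0) (h : A * B = 1) :
    (Matrix.of fun i j : Fin m => A i.castSucc j.castSucc)
      * (Matrix.of fun i j : Fin m => B i.castSucc j.castSucc) = 1 := by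
  ext i j
  have h1 : (A * B) i.castSucc j.castSucc
      = (1 : Matrix (Fin (m+1)) (Fin (m+1)) S) i.castSucc j.castSucc := by rw [h]
  rw [Matrix.mul_apply, Fin.sum_univ_castSucc,
    hB (Fin.last m) j.castSucc (Fin.castSucc_lt_last j), mul_zero, add_zero] at h1
  rw [Matrix.mul_apply]
  simp only [Matrix.of_apply]
  rw [h1, Matrix.one_apply, Matrix.one_apply]
  simp [Fin.castSucc_inj]

lemma aux_delta_eq {m : ℕ} (Q : Matrix (Fin (m + 1)) (Fin (m + 1)) S)
    (Q1inv : Matrix (Fin m) (Fin m) S)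
    (hQ1' : Q1inv * (Matrix.of fun i j : Fin m => Q i.succ j.castSucc) = 1)
    (w : Fin (m + 1) → S) (hwlast : w (Fin.last m) = 1)
    (hrows : ∀ j : Fin m, Q.mulVec w j.succ = 0) :
    DeltaOf m Q Q1inv = Q.mulVec w 0 := by
  set Q1 : Matrix (Fin m) (Fin m) S := Matrix.of fun i j : Fin m => Q i.succ j.castSucc with hQ1def
  have hQ1ws : Q1.mulVec (fun k => w k.castSucc)
      = fun j => -(Q j.succ (Fin.last m)) := by
    funext j
    have h0 := hrows j
    rw [Matrix.mulVec, dotProduct, Fin.sum_univ_castSucc, hwlast, mul_one] at h0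
    have : Q1.mulVec (fun k => w k.castSucc) j
        = ∑ i : Fin m, Q j.succ i.castSucc * w i.castSucc := by
      simp [Matrix.mulVec, dotProduct, Q1]
    rw [this]
    exact eq_neg_of_add_eq_zero_left h0
  have hws : ∀ k : Fin m, w k.castSucc = -∑ j : Fin m, Q1inv k j * Q j.succ (Fin.last m) := by
    intro k
    have h2 : Q1inv.mulVec (Q1.mulVec (fun k => w k.castSucc)) = fun k => w k.castSucc := by
      rw [Matrix.mulVec_mulVec, hQ1', Matrix.one_mulVec]
    have h3 := congrFun h2 k
    rw [hQ1ws] at h3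
    rw [← h3]
    simp [Matrix.mulVec, dotProduct, Finset.sum_neg_distrib, mul_neg]
  unfold DeltaOf
  rw [Matrix.mulVec, dotProduct, Fin.sum_univ_castSucc, hwlast, mul_one]
  have hterm : ∀ i : Fin m, Q 0 i.castSucc * w i.castSucc
      = -∑ j : Fin m, Q 0 i.castSucc * Q1inv i j * Q j.succ (Fin.last m) := by
    intro i
    rw [hws i, mul_neg, Finset.mul_sum]
    simp [mul_assoc]
  simp only [hterm, Finset.sum_neg_distrib]
  abel

end DeltaHelpers

/-- (a) `Δ` is invariant under conjugation by an upper triangular matrix with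
unity on the diagonal; (b) for an anti-isomorphism `*` of `R` and the induced
anti-isomorphism `T` of matrices, `(R^T)_{ij} = (R_{m+1-j, m+1-i})*`, one has
`Δ(R^T) = Δ(R)*`. -/
theorem delta_invariance {S : Type*} [Ring S] (m : ℕ) (hm : 0 < m)
    (R : Matrix (Fin (m + 1)) (Fin (m + 1)) S)
    (R1inv : Matrix (Fin m) (Fin m) S)
    (hR1 : (Matrix.of fun i j : Fin m => R i.succ j.castSucc) * R1inv = 1)
    (hR1' : R1inv * (Matrix.of fun i j : Fin m => R i.succ j.castSucc) = 1) :
    (∀ (N Ninv : Matrix (Fin (m + 1)) (Fin (m + 1)) S),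
      (∀ i j : Fin (m + 1), j < i → N i j = 0) → (∀ i, N i i = 1) →
      N * Ninv = 1 → Ninv * N = 1 →
      ∃ S1inv : Matrix (Fin m) (Fin m) S,
        (Matrix.of fun i j : Fin m => (N * R * Ninv) i.succ j.castSucc) * S1inv = 1
        ∧ S1inv * (Matrix.of fun i j : Fin m => (N * R * Ninv) i.succ j.castSucc) = 1
        ∧ DeltaOf m (N * R * Ninv) S1inv = DeltaOf m R R1inv)
    ∧ (∀ σ : S → S, Function.Bijective σ → (∀ x y, σ (x + y) = σ x + σ y) →
        (∀ x y, σ (x * y) = σ y * σ x) → σ 1 = 1 →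
      ∃ T1inv : Matrix (Fin m) (Fin m) S,
        (Matrix.of fun i j : Fin m =>
            (Matrix.of fun i' j' : Fin (m + 1) => σ (R j'.rev i'.rev)) i.succ j.castSucc)
          * T1inv = 1
        ∧ T1inv * (Matrix.of fun i j : Fin m =>
            (Matrix.of fun i' j' : Fin (m + 1) => σ (R j'.rev i'.rev)) i.succ j.castSucc) = 1
        ∧ DeltaOf m (Matrix.of fun i' j' : Fin (m + 1) => σ (R j'.rev i'.rev)) T1inv
            = σ (DeltaOf m R R1inv)) := by
  classical
  set R1 : Matrix (Fin m) (Fin m) S := Matrix.of fun i j : Fin m => R i.succ j.castSucc with hR1def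
  constructor
  · -- part (a)
    intro N Ninv htri hdiag hNN hNN'
    obtain ⟨htri', hdiag'⟩ := aux_inv_tri htri hdiag hNN'
    set Nbar : Matrix (Fin m) (Fin m) S := Matrix.of fun i j : Fin m => N i.succ j.succ with hNbar
    set Mbar : Matrix (Fin m) (Fin m) S :=
      Matrix.of fun i j : Fin m => Ninv i.castSucc j.castSucc with hMbar
    set Nbar' : Matrix (Fin m) (Fin m) S :=
      Matrix.of fun i j : Fin m => N i.castSucc j.castSucc with hNbar'
    set Mbar'' : Matrix (Fin m) (Fin m) S :=
      Matrix.of fun i j : Fin m => Ninv i.succ j.succ with hMbar''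
    have hNM : Nbar * Mbar'' = 1 := aux_block_succ htri hNN
    have hMN : Mbar'' * Nbar = 1 := aux_block_succ htri' hNN'
    have hMN2 : Mbar * Nbar' = 1 := aux_block_cast htri hNN'
    have hNM2 : Nbar' * Mbar = 1 := aux_block_cast htri' hNN
    have hL : ∀ i j : Fin m, (N * R * Ninv) i.succ j.castSucc
        = ∑ k : Fin m, N i.succ k.succ
            * ∑ l : Fin m, R k.succ l.castSucc * Ninv l.castSucc j.castSucc := by
      intro i j
      rw [Matrix.mul_assoc, Matrix.mul_apply, Fin.sum_univ_succ,
        htri i.succ 0 (Fin.succ_pos i), zero_mul, zero_add]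
      refine Finset.sum_congr rfl fun k _ => ?_
      rw [Matrix.mul_apply, Fin.sum_univ_castSucc,
        htri' (Fin.last m) j.castSucc (Fin.castSucc_lt_last j), mul_zero, add_zero]
    have hblock : (Matrix.of fun i j : Fin m => (N * R * Ninv) i.succ j.castSucc)
        = Nbar * (R1 * Mbar) := by
      ext i j
      rw [Matrix.of_apply, hL i j, Matrix.mul_apply]
      refine Finset.sum_congr rfl fun k _ => ?_
      rw [Matrix.mul_apply]
      simp [Nbar, Mbar, R1]
    refine ⟨Nbar' * (R1inv * Mbar''), ?_, ?_, ?_⟩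
    · rw [hblock]
      simp only [Matrix.mul_assoc]
      rw [← Matrix.mul_assoc Mbar Nbar', hMN2, Matrix.one_mul,
        ← Matrix.mul_assoc R1 R1inv, hR1, Matrix.one_mul]
      exact hNM
    · rw [hblock]
      simp only [Matrix.mul_assoc]
      rw [← Matrix.mul_assoc Mbar'' Nbar, hMN, Matrix.one_mul,
        ← Matrix.mul_assoc R1inv R1, hR1', Matrix.one_mul]
      exact hNM2
    · -- Delta invariance
      set βR : Fin m → S := fun j => R j.succ (Fin.last m) with hβR
      set v : Fin (m + 1) → S :=
        Fin.lastCases 1 (fun k => -(R1inv.mulVec βR) k) with hv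
      have hvlast : v (Fin.last m) = 1 := Fin.lastCases_last
      have hvcast : ∀ k : Fin m, v k.castSucc = -(R1inv.mulVec βR) k := fun k =>
        Fin.lastCases_castSucc k
      have hRv : ∀ i, R.mulVec v i = if i = 0 then DeltaOf m R R1inv else 0 := by
        intro i
        induction i using Fin.cases with
        | zero =>
          rw [if_pos rfl, Matrix.mulVec, dotProduct, Fin.sum_univ_castSucc, hvlast,
            mul_one]
          unfold DeltaOf
          have hterm : ∀ k : Fin m, R 0 k.castSucc * v k.castSucc
              = -∑ j : Fin m, R 0 k.castSucc * R1inv k j * R j.succ (Fin.last m) := by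
            intro k
            rw [hvcast k]
            simp [Matrix.mulVec, dotProduct, Finset.mul_sum, mul_assoc, βR]
          simp only [hterm, Finset.sum_neg_distrib]
          abel
        | succ j =>
          rw [if_neg (Fin.succ_ne_zero j), Matrix.mulVec, dotProduct,
            Fin.sum_univ_castSucc, hvlast, mul_one]
          have h1 : ∑ k : Fin m, R j.succ k.castSucc * v k.castSucc
              = R1.mulVec (fun k => v k.castSucc) j := by
            simp [Matrix.mulVec, dotProduct, R1]
          have h2 : R1.mulVec (fun k => v k.castSucc) = fun j => -(βR j) := by
            have : (fun k => v k.castSucc) = fun k => (-(R1inv.mulVec βR)) k := by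
              funext k; rw [hvcast k]; rfl
            rw [this]
            show R1.mulVec (-(R1inv.mulVec βR)) = _
            rw [Matrix.mulVec_neg, Matrix.mulVec_mulVec, hR1, Matrix.one_mulVec]
            rfl
          rw [h1, h2]
          simp [βR]
      set w : Fin (m + 1) → S := N.mulVec v with hw
      have hwlast : w (Fin.last m) = 1 := by
        rw [hw]
        show ∑ k, N (Fin.last m) k * v k = 1
        rw [Finset.sum_eq_single (Fin.last m)]
        · rw [hdiag, hvlast, one_mul]
        · intro k _ hk
          rw [htri (Fin.last m) k (lt_of_le_of_ne (Fin.le_last k) hk), zero_mul]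
        · simp
      have hSw : ∀ i, (N * R * Ninv).mulVec w i
          = if i = 0 then DeltaOf m R R1inv else 0 := by
        have hall : (N * R * Ninv).mulVec w = N.mulVec (R.mulVec v) := by
          rw [hw, Matrix.mulVec_mulVec, Matrix.mul_assoc (N * R) Ninv N, hNN',
            Matrix.mul_one, ← Matrix.mulVec_mulVec]
        intro i
        rw [hall]
        have hRv' : R.mulVec v = fun k => if k = 0 then DeltaOf m R R1inv else 0 :=
          funext hRv
        rw [hRv']
        show ∑ k, N i k * (if k = 0 then DeltaOf m R R1inv else 0) = _
        rw [Finset.sum_eq_single 0]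
        · rw [if_pos rfl]
          induction i using Fin.cases with
          | zero => rw [hdiag, one_mul, if_pos rfl]
          | succ j => rw [htri j.succ 0 (Fin.succ_pos j), zero_mul,
              if_neg (Fin.succ_ne_zero j)]
        · intro k _ hk
          rw [if_neg hk, mul_zero]
        · simp
      have hrows : ∀ j : Fin m, (N * R * Ninv).mulVec w j.succ = 0 := by
        intro j
        rw [hSw j.succ, if_neg (Fin.succ_ne_zero j)]
      have hS1' : (Nbar' * (R1inv * Mbar''))
          * (Matrix.of fun i j : Fin m => (N * R * Ninv) i.succ j.castSucc) = 1 := by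
        rw [hblock]
        simp only [Matrix.mul_assoc]
        rw [← Matrix.mul_assoc Mbar'' Nbar, hMN, Matrix.one_mul,
          ← Matrix.mul_assoc R1inv R1, hR1', Matrix.one_mul]
        exact hNM2
      rw [aux_delta_eq (N * R * Ninv) (Nbar' * (R1inv * Mbar'')) hS1' w hwlast hrows,
        hSw 0, if_pos rfl]
  · -- part (b)
    intro σ hbij hadd hmul h1
    have h0 : σ 0 = 0 := by
      have := hadd 0 0
      rw [add_zero] at this
      exact right_eq_add.mp this
    have hsum : ∀ {ι : Type} (s : Finset ι) (f : ι → S),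
        σ (∑ i ∈ s, f i) = ∑ i ∈ s, σ (f i) := by
      intro ι s f
      induction s using Finset.cons_induction with
      | empty => simpa using h0
      | cons a s ha ih => rw [Finset.sum_cons, Finset.sum_cons, hadd, ih]
    have hneg : ∀ x : S, σ (-x) = -σ x := by
      intro x
      have := hadd x (-x)
      rw [add_neg_cancel, h0] at this
      exact (eq_neg_of_add_eq_zero_right this.symm)
    have hsub : ∀ x y : S, σ (x - y) = σ x - σ y := by
      intro x y
      rw [sub_eq_add_neg, hadd, hneg, sub_eq_add_neg]
    set T : Matrix (Fin (m + 1)) (Fin (m + 1)) S :=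
      Matrix.of fun i' j' : Fin (m + 1) => σ (R j'.rev i'.rev) with hT
    set T1inv : Matrix (Fin m) (Fin m) S :=
      Matrix.of fun i j : Fin m => σ (R1inv j.rev i.rev) with hT1invdef
    have hTb : ∀ i k : Fin m, T i.succ k.castSucc = σ (R1 k.rev i.rev) := by
      intro i k
      simp [T, Fin.rev_castSucc, Fin.rev_succ, R1]
    refine ⟨T1inv, ?_, ?_, ?_⟩
    · ext i j
      rw [Matrix.mul_apply]
      calc ∑ k : Fin m, (Matrix.of fun i j : Fin m => T i.succ j.castSucc) i k * T1inv k j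
          = ∑ k : Fin m, σ (R1inv j.rev k.rev * R1 k.rev i.rev) := by
            refine Finset.sum_congr rfl fun k _ => ?_
            rw [Matrix.of_apply, hTb i k, hT1invdef, Matrix.of_apply, ← hmul]
        _ = σ (∑ k : Fin m, R1inv j.rev k.rev * R1 k.rev i.rev) := (hsum _ _).symm
        _ = σ (∑ k : Fin m, R1inv j.rev k * R1 k i.rev) := by
            congr 1
            exact Finset.sum_bijective Fin.rev Fin.rev_bijective (by simp) (fun k _ => rfl)
        _ = σ ((R1inv * R1) j.rev i.rev) := by rw [Matrix.mul_apply]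
        _ = (1 : Matrix (Fin m) (Fin m) S) i j := by
            rw [hR1', Matrix.one_apply, Matrix.one_apply]
            by_cases hij : i = j
            · subst hij; rw [if_pos rfl, if_pos rfl, h1]
            · rw [if_neg (fun h => hij ((Fin.rev_inj.mp h).symm)), if_neg hij, h0]
    · ext i j
      rw [Matrix.mul_apply]
      calc ∑ k : Fin m, T1inv i k * (Matrix.of fun i j : Fin m => T i.succ j.castSucc) k j
          = ∑ k : Fin m, σ (R1 j.rev k.rev * R1inv k.rev i.rev) := by
            refine Finset.sum_congr rfl fun k _ => ?_
            rw [Matrix.of_apply, hTb k j, hT1invdef, Matrix.of_apply, ← hmul]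
        _ = σ (∑ k : Fin m, R1 j.rev k.rev * R1inv k.rev i.rev) := (hsum _ _).symm
        _ = σ (∑ k : Fin m, R1 j.rev k * R1inv k i.rev) := by
            congr 1
            exact Finset.sum_bijective Fin.rev Fin.rev_bijective (by simp) (fun k _ => rfl)
        _ = σ ((R1 * R1inv) j.rev i.rev) := by rw [Matrix.mul_apply]
        _ = (1 : Matrix (Fin m) (Fin m) S) i j := by
            rw [hR1, Matrix.one_apply, Matrix.one_apply]
            by_cases hij : i = j
            · subst hij; rw [if_pos rfl, if_pos rfl, h1]
            · rw [if_neg (fun h => hij ((Fin.rev_inj.mp h).symm)), if_neg hij, h0]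
    · unfold DeltaOf
      have hTlast : T 0 (Fin.last m) = σ (R 0 (Fin.last m)) := by
        simp [T, Fin.rev_last, Fin.rev_zero]
      have hterm : ∀ i j : Fin m, T 0 i.castSucc * T1inv i j * T j.succ (Fin.last m)
          = σ (R 0 j.rev.castSucc * R1inv j.rev i.rev * R i.rev.succ (Fin.last m)) := by
        intro i j
        have e1 : T 0 i.castSucc = σ (R i.rev.succ (Fin.last m)) := by
          simp [T, Fin.rev_castSucc, Fin.rev_zero]
        have e2 : T j.succ (Fin.last m) = σ (R 0 j.rev.castSucc) := by
          simp [T, Fin.rev_succ, Fin.rev_last]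
        have e3 : T1inv i j = σ (R1inv j.rev i.rev) := rfl
        rw [e1, e2, e3, ← hmul, ← hmul, mul_assoc]
      have hkey : ∑ i : Fin m, ∑ j : Fin m,
            T 0 i.castSucc * T1inv i j * T j.succ (Fin.last m)
          = σ (∑ i : Fin m, ∑ j : Fin m,
              R 0 i.castSucc * R1inv i j * R j.succ (Fin.last m)) := by
        calc ∑ i : Fin m, ∑ j : Fin m, T 0 i.castSucc * T1inv i j * T j.succ (Fin.last m)
            = ∑ i : Fin m, ∑ j : Fin m,
                σ (R 0 j.rev.castSucc * R1inv j.rev i.rev * R i.rev.succ (Fin.last m)) := by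
              exact Finset.sum_congr rfl fun i _ => Finset.sum_congr rfl fun j _ => hterm i j
          _ = ∑ i : Fin m, ∑ j : Fin m,
                σ (R 0 j.castSucc * R1inv j i.rev * R i.rev.succ (Fin.last m)) := by
              refine Finset.sum_congr rfl fun i _ => ?_
              exact Finset.sum_bijective Fin.rev Fin.rev_bijective (by simp) (fun k _ => rfl)
          _ = ∑ i : Fin m, ∑ j : Fin m,
                σ (R 0 j.castSucc * R1inv j i * R i.succ (Fin.last m)) := by
              exact Finset.sum_bijective Fin.rev Fin.rev_bijective (by simp) (fun k _ => rfl)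
          _ = ∑ j : Fin m, ∑ i : Fin m,
                σ (R 0 j.castSucc * R1inv j i * R i.succ (Fin.last m)) := Finset.sum_comm
          _ = σ (∑ i : Fin m, ∑ j : Fin m,
                R 0 i.castSucc * R1inv i j * R j.succ (Fin.last m)) := by
              rw [hsum]
              exact Finset.sum_congr rfl fun i _ => (hsum _ _).symm
      rw [hTlast, hkey, ← hsub]
end
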